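/- Let θ be odd with θ(u+1) = -θ(u), and let c_N be as in the duality formula. Then c_N(z₁,…,z_N | w₁,…,w_{N-1}, z_N | h) = -[θ(h-N/2+1)/θ(h+1/2)] · ∏_{j=1}^{N-1} [θ(z_N-w_j+1/2)/θ(z_N-w_j)] · ∏_{j=1}^{N-1} [θ(z_j-z_N+1/2)/θ(z_j-z_N)] · c_{N-1}(z₁,…,z_{N-1} | w₁,…,w_{N-1} | h + 1/2), wherever all denominators are nonzero. -/

import Mathlib

noncomputable def cfun (θ : ℂ → ℂ) (N : ℕ) (z w : Fin N → ℂ) (h : ℂ) : ℂ :=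
  (θ h * ∏ j : Fin N, θ (h - (((j : ℕ) : ℂ) + 1) / 2 + 1))
    / (θ (h - (N : ℂ) / 2)
        * ∏ j : Fin N, θ (h + ((N : ℂ) + 1) / 2 - (((j : ℕ) : ℂ) + 1)))
    * ∏ j : Fin N, ∏ k : Fin N,
        if j < k then
          θ (z j - z k + 1/2) * θ (w k - w j + 1/2)
            / (θ (z j - z k) * θ (w k - w j))
        else 1

theorem cfun_recursion_wN_eq_zN (θ : ℂ → ℂ)
    (hodd : ∀ u : ℂ, θ (-u) = -θ u)
    (hper : ∀ u : ℂ, θ (u + 1) = -θ u)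
    (n : ℕ) (z w : Fin (n+1) → ℂ) (h : ℂ)
    (hw : w (Fin.last n) = z (Fin.last n))
    (hz : ∀ j k : Fin (n+1), j ≠ k → θ (z j - z k) ≠ 0)
    (hww : ∀ j k : Fin (n+1), j ≠ k → θ (w k - w j) ≠ 0)
    (hh1 : θ (h - ((n : ℂ) + 1) / 2) ≠ 0)
    (hh2 : ∀ j : Fin (n+1), θ (h + ((n : ℂ) + 2) / 2 - (((j : ℕ) : ℂ) + 1)) ≠ 0)
    (hh3 : θ (h + 1/2) ≠ 0)
    (hh4 : θ (h + 1 - ((n : ℂ) + 1) / 2) ≠ 0) :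
    cfun θ (n+1) z w h
      = -(θ (h - ((n : ℂ) + 1) / 2 + 1) / θ (h + 1/2))
        * (∏ j : Fin n, θ (z (Fin.last n) - w j.castSucc + 1/2)
            / θ (z (Fin.last n) - w j.castSucc))
        * (∏ j : Fin n, θ (z j.castSucc - z (Fin.last n) + 1/2)
            / θ (z j.castSucc - z (Fin.last n)))
        * cfun θ n (z ∘ Fin.castSucc) (w ∘ Fin.castSucc) (h + 1/2) := by
  -- numerator product identity
  have eNum : θ (h+1) * ∏ j : Fin (n+1), θ (h - (((j : ℕ) : ℂ) + 1) / 2 + 1)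
      = (∏ j : Fin n, θ ((h + 1/2) - (((j : ℕ) : ℂ) + 1) / 2 + 1))
        * θ (h - (n : ℂ) / 2 + 1) * θ (h - ((n : ℂ) + 1) / 2 + 1) := by
    have e1 : ∏ j : Fin (n+2), θ (h - ((j : ℕ) : ℂ) / 2 + 1)
        = θ (h+1) * ∏ j : Fin (n+1), θ (h - (((j : ℕ) : ℂ) + 1) / 2 + 1) := by
      rw [Fin.prod_univ_succ]
      congr 1
      · norm_num
      · exact Finset.prod_congr rfl fun j _ => by push_cast [Fin.val_succ]; ring_nf
    have e2 : ∏ j : Fin (n+2), θ (h - ((j : ℕ) : ℂ) / 2 + 1)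
        = ((∏ j : Fin n, θ ((h + 1/2) - (((j : ℕ) : ℂ) + 1) / 2 + 1))
            * θ (h - (n : ℂ) / 2 + 1)) * θ (h - ((n : ℂ) + 1) / 2 + 1) := by
      rw [Fin.prod_univ_castSucc, Fin.prod_univ_castSucc]
      push_cast [Fin.coe_castSucc, Fin.val_last]
      rw [Finset.prod_congr rfl (fun (j : Fin n) _ =>
        show θ (h - ((j:ℕ):ℂ)/2 + 1) = θ ((h+1/2) - (((j:ℕ):ℂ)+1)/2 + 1) from by ring_nf)]
    rw [← e1, e2]
  -- denominator product identity
  have eDen : ∏ j : Fin (n+1), θ (h + ((n : ℂ) + 1 + 1) / 2 - (((j : ℕ) : ℂ) + 1))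
      = (∏ j : Fin n, θ ((h + 1/2) + ((n : ℂ) + 1) / 2 - (((j : ℕ) : ℂ) + 1)))
        * θ (h - (n : ℂ) / 2) := by
    rw [Fin.prod_univ_castSucc]
    push_cast [Fin.coe_castSucc, Fin.val_last]
    rw [Finset.prod_congr rfl (fun (j : Fin n) _ =>
      show θ (h + ((n:ℂ)+1+1)/2 - (((j:ℕ):ℂ)+1)) = θ ((h+1/2) + ((n:ℂ)+1)/2 - (((j:ℕ):ℂ)+1)) from by
        ring_nf)]
    congr 1
    ring_nf
  -- cross product split
  have eCross : (∏ j : Fin (n+1), ∏ k : Fin (n+1),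
        if j < k then θ (z j - z k + 1/2) * θ (w k - w j + 1/2) / (θ (z j - z k) * θ (w k - w j)) else 1)
      = (∏ j : Fin n, ∏ k : Fin n,
          if j < k then θ ((z ∘ Fin.castSucc) j - (z ∘ Fin.castSucc) k + 1/2) * θ ((w ∘ Fin.castSucc) k - (w ∘ Fin.castSucc) j + 1/2)
            / (θ ((z ∘ Fin.castSucc) j - (z ∘ Fin.castSucc) k) * θ ((w ∘ Fin.castSucc) k - (w ∘ Fin.castSucc) j)) else 1)
        * ∏ j : Fin n, (θ (z j.castSucc - z (Fin.last n) + 1/2) * θ (z (Fin.last n) - w j.castSucc + 1/2)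
            / (θ (z j.castSucc - z (Fin.last n)) * θ (z (Fin.last n) - w j.castSucc))) := by
    rw [Fin.prod_univ_castSucc]
    have hlast : (∏ k : Fin (n+1), if Fin.last n < k then θ (z (Fin.last n) - z k + 1/2) * θ (w k - w (Fin.last n) + 1/2) / (θ (z (Fin.last n) - z k) * θ (w k - w (Fin.last n))) else 1) = 1 := by
      apply Finset.prod_eq_one
      intro k _
      rw [if_neg (by exact fun hk => absurd (Fin.le_last k) (not_le.mpr hk))]
    rw [hlast, mul_one, ← Finset.prod_mul_distrib]
    apply Finset.prod_congr rfl
    intro j _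
    rw [Fin.prod_univ_castSucc]
    congr 1
    rw [if_pos (Fin.castSucc_lt_last j), hw]
  -- split the last product into two quotient products
  have eSplit : (∏ j : Fin n, (θ (z j.castSucc - z (Fin.last n) + 1/2) * θ (z (Fin.last n) - w j.castSucc + 1/2)
        / (θ (z j.castSucc - z (Fin.last n)) * θ (z (Fin.last n) - w j.castSucc))))
      = (∏ j : Fin n, θ (z j.castSucc - z (Fin.last n) + 1/2) / θ (z j.castSucc - z (Fin.last n)))
        * (∏ j : Fin n, θ (z (Fin.last n) - w j.castSucc + 1/2) / θ (z (Fin.last n) - w j.castSucc)) := by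
    rw [← Finset.prod_mul_distrib]
    exact Finset.prod_congr rfl fun j _ => (div_mul_div_comm _ _ _ _).symm
  -- nonvanishing facts
  have hd : θ (h - (n : ℂ) / 2) ≠ 0 := by
    have := hh2 (Fin.last n)
    simp only [Fin.val_last] at this
    convert this using 2
    push_cast; ring
  have hSD : (∏ j : Fin n, θ ((h + 1/2) + ((n : ℂ) + 1) / 2 - (((j : ℕ) : ℂ) + 1))) ≠ 0 := by
    rw [Finset.prod_ne_zero_iff]
    intro j _
    have := hh2 j.castSucc
    simp only [Fin.coe_castSucc] at this
    convert this using 2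
    push_cast; ring
  -- the scalar prefactor identity
  have key : (θ h * ∏ j : Fin (n+1), θ (h - (((j : ℕ) : ℂ) + 1) / 2 + 1))
        / (θ (h - ((n : ℂ) + 1) / 2) * ∏ j : Fin (n+1), θ (h + ((n : ℂ) + 1 + 1) / 2 - (((j : ℕ) : ℂ) + 1)))
      = -(θ (h - ((n : ℂ) + 1) / 2 + 1) / θ (h + 1/2))
        * ((θ (h + 1/2) * ∏ j : Fin n, θ ((h + 1/2) - (((j : ℕ) : ℂ) + 1) / 2 + 1))
            / (θ (h + 1/2 - (n : ℂ) / 2) * ∏ j : Fin n, θ ((h + 1/2) + ((n : ℂ) + 1) / 2 - (((j : ℕ) : ℂ) + 1)))) := by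
    have hp1 : θ (h + 1) = -θ h := hper h
    have hp2 : θ (h - (n : ℂ) / 2 + 1) = -θ (h - (n : ℂ) / 2) := hper _
    have hp3 : θ (h + 1/2 - (n : ℂ) / 2) = -θ (h - ((n : ℂ) + 1) / 2) := by
      rw [show h + 1/2 - (n : ℂ) / 2 = (h - ((n : ℂ) + 1) / 2) + 1 by ring, hper]
    have hNum : θ h * ∏ j : Fin (n+1), θ (h - (((j : ℕ) : ℂ) + 1) / 2 + 1)
        = (∏ j : Fin n, θ ((h + 1/2) - (((j : ℕ) : ℂ) + 1) / 2 + 1))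
          * θ (h - (n : ℂ) / 2) * θ (h - ((n : ℂ) + 1) / 2 + 1) := by
      have := eNum
      rw [hp1, hp2] at this
      linear_combination -this
    have aux : ∀ A D c1 d e b : ℂ, c1 ≠ 0 → d ≠ 0 → b ≠ 0 → D ≠ 0 →
        A * d * e / (c1 * (D * d)) = -(e / b) * (b * A / (-c1 * D)) := by
      intro A D c1 d e b hc1 hd hb hD
      field_simp
    rw [hNum, eDen, hp3]
    exact aux _ _ _ _ _ _ hh1 hd hh3 hSD
  -- assemble
  simp only [cfun]
  push_cast
  rw [eCross, eSplit, key]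
  ring
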